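/- Let R be a commutative ring, A ∈ Rˣ. In the quotient algebra T = S/(Ω − (2A² + 2A⁻²)) where S = R⟨x₁,x₂,x₃ | [xᵢ,xᵢ₊₁]_A = δxᵢ₊₂⟩ and Ω = A²x₁² + A⁻²x₂² + A²x₃² − A·x₁x₂x₃ (the presentation of the skein algebra of the closed torus), specialize R = ℤ, A = −1: then T is isomorphic to ℤ[x₁,x₂,x₃]/(x₁² + x₂² + x₃² − x₁x₂x₃ − 4). -/

import Mathlib

open FreeAlgebra

/-- The presentation of the Kauffman bracket skein algebra of the closed torus at
`R = ℤ`, `A = −1`: the skein relations `[xᵢ,xᵢ₊₁]_A = (A²−A⁻²)·xᵢ₊₂` together with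
the boundary relation `Ω = A²x₁² + A⁻²x₂² + A²x₃² − A·x₁x₂x₃ = 2A² + 2A⁻²`. -/
inductive ClosedTorusRel : FreeAlgebra ℤ (Fin 3) → FreeAlgebra ℤ (Fin 3) → Prop
  | skein (i : Fin 3) :
      ClosedTorusRel
        ((((-1 : ℤˣ) : ℤ)) • (ι ℤ i * ι ℤ (i + 1))
          - (((-1 : ℤˣ)⁻¹ : ℤˣ) : ℤ) • (ι ℤ (i + 1) * ι ℤ i))
        ((((-1 : ℤˣ) : ℤ) ^ 2 - (((-1 : ℤˣ)⁻¹ : ℤˣ) : ℤ) ^ 2) • ι ℤ (i + 2))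
  | omega :
      ClosedTorusRel
        (((-1 : ℤˣ) : ℤ) ^ 2 • (ι ℤ 0) ^ 2 + (((-1 : ℤˣ)⁻¹ : ℤˣ) : ℤ) ^ 2 • (ι ℤ 1) ^ 2
          + ((-1 : ℤˣ) : ℤ) ^ 2 • (ι ℤ 2) ^ 2
          - ((-1 : ℤˣ) : ℤ) • (ι ℤ 0 * ι ℤ 1 * ι ℤ 2))
        ((2 * ((-1 : ℤˣ) : ℤ) ^ 2 + 2 * (((-1 : ℤˣ)⁻¹ : ℤˣ) : ℤ) ^ 2)
          • (1 : FreeAlgebra ℤ (Fin 3)))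

namespace Stmt17Aux

noncomputable abbrev mk : FreeAlgebra ℤ (Fin 3) →+* RingQuot ClosedTorusRel :=
  RingQuot.mkRingHom ClosedTorusRel

lemma adj_comm (i : Fin 3) : mk (ι ℤ i * ι ℤ (i + 1)) = mk (ι ℤ (i + 1) * ι ℤ i) := by
  have h := RingQuot.mkRingHom_rel (ClosedTorusRel.skein i)
  have hinv : ((-1 : ℤˣ)⁻¹ : ℤˣ) = -1 := by decide
  rw [hinv] at h
  simp only [Units.val_neg, Units.val_one, neg_smul, one_smul,
    sub_neg_eq_add, neg_neg, map_add, map_neg] at h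
  have h2 : ((-1 : ℤ) ^ 2 - (-1 : ℤ) ^ 2) = 0 := by ring
  rw [h2, zero_smul, map_zero] at h
  have := neg_add_eq_zero.mp h
  exact this

lemma gen_comm (i j : Fin 3) : Commute (mk (ι ℤ i)) (mk (ι ℤ j)) := by
  have key : ∀ k : Fin 3, Commute (mk (ι ℤ k)) (mk (ι ℤ (k + 1))) := fun k => by
    have := adj_comm k
    simpa [Commute, SemiconjBy, map_mul] using this
  fin_cases i <;> fin_cases j
  · exact Commute.refl _
  · exact key 0
  · exact (key 2).symm
  · exact (key 0).symm
  · exact Commute.refl _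
  · exact key 1
  · exact key 2
  · exact (key 1).symm
  · exact Commute.refl _

lemma gen_central (i : Fin 3) (y : FreeAlgebra ℤ (Fin 3)) :
    Commute (mk (ι ℤ i)) (mk y) := by
  induction y using FreeAlgebra.induction with
  | grade0 r =>
    have : mk (algebraMap ℤ _ r) = (r : RingQuot ClosedTorusRel) := by
      simp [algebraMap_int_eq, map_intCast]
    rw [this]; exact (Int.cast_commute r _).symm
  | grade1 j => exact gen_comm i j
  | mul a b ha hb => rw [map_mul]; exact ha.mul_right hb
  | add a b ha hb => rw [map_add]; exact ha.add_right hb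

lemma mk_comm (x y : FreeAlgebra ℤ (Fin 3)) : Commute (mk x) (mk y) := by
  induction x using FreeAlgebra.induction with
  | grade0 r =>
    have : mk (algebraMap ℤ _ r) = (r : RingQuot ClosedTorusRel) := by
      simp [algebraMap_int_eq, map_intCast]
    rw [this]; exact Int.cast_commute r _
  | grade1 i => exact gen_central i y
  | mul a b ha hb => rw [map_mul]; exact ha.mul_left hb
  | add a b ha hb => rw [map_add]; exact ha.add_left hb

noncomputable instance : CommRing (RingQuot ClosedTorusRel) :=
  { (inferInstance : Ring (RingQuot ClosedTorusRel)) with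
    mul_comm := fun a b => by
      obtain ⟨x, rfl⟩ := RingQuot.mkRingHom_surjective ClosedTorusRel a
      obtain ⟨y, rfl⟩ := RingQuot.mkRingHom_surjective ClosedTorusRel b
      exact mk_comm x y }

open MvPolynomial

noncomputable abbrev Tgt :=
  MvPolynomial (Fin 3) ℤ ⧸
    Ideal.span {((X 0) ^ 2 + (X 1) ^ 2 + (X 2) ^ 2 - X 0 * X 1 * X 2
      - 4 : MvPolynomial (Fin 3) ℤ)}

noncomputable abbrev q : MvPolynomial (Fin 3) ℤ →ₐ[ℤ] Tgt :=
  Ideal.Quotient.mkₐ ℤ _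

lemma q_rel : (q (X 0)) ^ 2 + (q (X 1)) ^ 2 + (q (X 2)) ^ 2
    - q (X 0) * q (X 1) * q (X 2) - 4 = 0 := by
  have : ((X 0) ^ 2 + (X 1) ^ 2 + (X 2) ^ 2 - X 0 * X 1 * X 2
      - 4 : MvPolynomial (Fin 3) ℤ) ∈ Ideal.span {((X 0) ^ 2 + (X 1) ^ 2 + (X 2) ^ 2
      - X 0 * X 1 * X 2 - 4 : MvPolynomial (Fin 3) ℤ)} :=
    Ideal.subset_span rfl
  have h := (Ideal.Quotient.eq_zero_iff_mem).2 this
  simpa [map_sub, map_add, map_mul, map_pow, map_ofNat] using h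

noncomputable def fPre : FreeAlgebra ℤ (Fin 3) →ₐ[ℤ] Tgt :=
  FreeAlgebra.lift ℤ (fun i => -(q (X i)))

lemma fPre_rel : ∀ ⦃a b⦄, ClosedTorusRel a b → fPre a = fPre b := by
  intro a b h
  have hinv : ((-1 : ℤˣ)⁻¹ : ℤˣ) = -1 := by decide
  cases h with
  | skein i =>
    rw [hinv]
    simp only [fPre, map_sub, map_smul, map_mul, FreeAlgebra.lift_ι_apply,
      Units.val_neg, Units.val_one, Algebra.smul_def, algebraMap_int_eq, eq_intCast,
      map_intCast, zsmul_eq_mul]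
    push_cast
    ring
  | omega =>
    rw [hinv]
    simp only [fPre, map_sub, map_add, map_smul, map_mul, map_pow, map_one,
      FreeAlgebra.lift_ι_apply, Units.val_neg, Units.val_one,
      Algebra.smul_def, algebraMap_int_eq, eq_intCast, map_intCast, zsmul_eq_mul]
    push_cast
    linear_combination q_rel

noncomputable def f : RingQuot ClosedTorusRel →ₐ[ℤ] Tgt :=
  RingQuot.liftAlgHom ℤ ⟨fPre, fPre_rel⟩

noncomputable abbrev mkA : FreeAlgebra ℤ (Fin 3) →ₐ[ℤ] RingQuot ClosedTorusRel :=
  RingQuot.mkAlgHom ℤ ClosedTorusRel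

lemma omega_rel : (mkA (ι ℤ 0)) ^ 2 + (mkA (ι ℤ 1)) ^ 2 + (mkA (ι ℤ 2)) ^ 2
    + mkA (ι ℤ 0) * mkA (ι ℤ 1) * mkA (ι ℤ 2) - 4 = 0 := by
  have h := RingQuot.mkAlgHom_rel ℤ ClosedTorusRel.omega
  have hinv : ((-1 : ℤˣ)⁻¹ : ℤˣ) = -1 := by decide
  rw [hinv] at h
  simp only [Units.val_neg, Units.val_one, map_add, map_sub, map_smul, map_mul, map_pow,
    map_one, Algebra.smul_def, algebraMap_int_eq, eq_intCast, map_intCast, zsmul_eq_mul] at h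
  push_cast at h ⊢
  linear_combination h

noncomputable def gPoly : MvPolynomial (Fin 3) ℤ →ₐ[ℤ] RingQuot ClosedTorusRel :=
  MvPolynomial.aeval (fun i => -(mkA (ι ℤ i)))

lemma gPoly_gen : gPoly ((X 0) ^ 2 + (X 1) ^ 2 + (X 2) ^ 2 - X 0 * X 1 * X 2
    - 4 : MvPolynomial (Fin 3) ℤ) = 0 := by
  simp only [gPoly, map_sub, map_add, map_mul, map_pow, MvPolynomial.aeval_X, map_ofNat]
  have h := omega_rel
  linear_combination (norm := ring_nf) h

noncomputable def g : Tgt →ₐ[ℤ] RingQuot ClosedTorusRel :=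
  Ideal.Quotient.liftₐ _ gPoly (by
    intro a ha
    rw [Ideal.mem_span_singleton'] at ha
    obtain ⟨c, rfl⟩ := ha
    rw [map_mul, gPoly_gen, mul_zero])

lemma g_mk (p : MvPolynomial (Fin 3) ℤ) : g (Ideal.Quotient.mk _ p) = gPoly p := rfl

lemma fg : (f.comp g) = AlgHom.id ℤ Tgt := by
  apply Ideal.Quotient.algHom_ext
  apply MvPolynomial.algHom_ext
  intro i
  simp [f, g_mk, gPoly, fPre, q, Ideal.Quotient.liftₐ_apply, RingQuot.liftAlgHom_mkAlgHom_apply]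

lemma gf : (g.comp f) = AlgHom.id ℤ (RingQuot ClosedTorusRel) := by
  apply RingQuot.ringQuot_ext'
  apply FreeAlgebra.hom_ext
  funext i
  simp [f, g_mk, gPoly, fPre, q, Ideal.Quotient.liftₐ_apply, RingQuot.liftAlgHom_mkAlgHom_apply]

noncomputable def theEquiv : RingQuot ClosedTorusRel ≃ₐ[ℤ] Tgt :=
  AlgEquiv.ofAlgHom f g fg gf

end Stmt17Aux

open MvPolynomial in
/-- the skein algebra of the closed torus at `R = ℤ`, `A = −1`
is isomorphic to `ℤ[x₁,x₂,x₃]/(x₁² + x₂² + x₃² − x₁x₂x₃ − 4)`. -/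
theorem stmt17 :
    Nonempty (RingQuot ClosedTorusRel ≃+*
      (MvPolynomial (Fin 3) ℤ ⧸
        Ideal.span {((X 0) ^ 2 + (X 1) ^ 2 + (X 2) ^ 2 - X 0 * X 1 * X 2
          - 4 : MvPolynomial (Fin 3) ℤ)})) := by
  exact ⟨Stmt17Aux.theEquiv.toRingEquiv⟩
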